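/- For any single-qubit density matrix ρ, the geometric coherence C_g(ρ) = 1 − max_{σ incoherent} F(ρ,σ) and the ℓ₁-norm of coherence C(ρ) = 2|ρ₀₁| satisfy C_g(ρ) = (1 − √(1 − C(ρ)²))/2. -/

import Mathlib

open Matrix
open scoped ComplexOrder Classical

/-- The positive semidefinite square root (as defined in the older Mathlib). -/
noncomputable def Matrix.PosSemidef.sqrt {𝕜 : Type*} [RCLike 𝕜] {n : Type*} [Fintype n]
    [DecidableEq n] {A : Matrix n n 𝕜} (hA : A.PosSemidef) : Matrix n n 𝕜 :=
  hA.1.eigenvectorUnitary.1 * diagonal ((↑) ∘ (hA.1.eigenvalues · |>.sqrt)) *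
    (star hA.1.eigenvectorUnitary : Matrix n n 𝕜)

/-- The trace norm ‖M‖₁ = Tr√(M†M). -/
noncomputable def traceNorm {n : Type*} [Fintype n] [DecidableEq n]
    (M : Matrix n n ℂ) : ℝ :=
  ((Matrix.posSemidef_conjTranspose_mul_self M).sqrt.trace).re

/-- A density matrix: positive semidefinite with unit trace. -/
def IsDensity {n : Type*} [Fintype n] (ρ : Matrix n n ℂ) : Prop :=
  ρ.PosSemidef ∧ ρ.trace = 1

/-- The fidelity F(ρ,σ) = ‖√ρ√σ‖₁² (= (Tr√(√ρ σ √ρ))² for states). -/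
noncomputable def fidelity {n : Type*} [Fintype n] [DecidableEq n]
    (ρ σ : Matrix n n ℂ) : ℝ :=
  if h : ρ.PosSemidef ∧ σ.PosSemidef then (traceNorm (h.1.sqrt * h.2.sqrt)) ^ 2 else 0

lemma Matrix.PosSemidef.posSemidef_sqrt {n : Type*} [Fintype n] [DecidableEq n]
    {A : Matrix n n ℂ} (hA : A.PosSemidef) : hA.sqrt.PosSemidef := by
  have h := (PosSemidef.diagonal (R := ℂ) (n := n)
    (d := ((↑) ∘ (hA.1.eigenvalues · |>.sqrt))) (fun i => by
      simp only [Function.comp_apply, Pi.zero_apply]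
      exact_mod_cast Real.sqrt_nonneg _)).mul_mul_conjTranspose_same
    (hA.1.eigenvectorUnitary : Matrix n n ℂ)
  rw [Matrix.PosSemidef.sqrt, Matrix.star_eq_conjTranspose]
  exact h

lemma Matrix.PosSemidef.sqrt_mul_self {n : Type*} [Fintype n] [DecidableEq n]
    {A : Matrix n n ℂ} (hA : A.PosSemidef) : hA.sqrt * hA.sqrt = A := by
  let C : Matrix n n ℂ := hA.1.eigenvectorUnitary
  let E := diagonal ((↑) ∘ (hA.1.eigenvalues · |>.sqrt) : n → ℂ)
  suffices C * (E * (star C * C) * E) * star C = A by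
    rw [Matrix.PosSemidef.sqrt]
    change C * E * star C * (C * E * star C) = A
    simpa only [← mul_assoc] using this
  have : star C * C = 1 := by simp [C]
  rw [this, mul_one]
  have : E * E = diagonal ((↑) ∘ hA.1.eigenvalues) := by
    rw [diagonal_mul_diagonal]
    congr! with v
    simp [← pow_two, ← Complex.ofReal_pow, Real.sq_sqrt (hA.eigenvalues_nonneg v)]
  rw [this]
  conv_rhs => rw [hA.1.spectral_theorem]
  simp [C, mul_assoc]

lemma psd_diag_re {n : Type*} [Fintype n] {M : Matrix n n ℂ} (hM : M.PosSemidef) (i : n) :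
    M i i = ((M i i).re : ℂ) ∧ 0 ≤ (M i i).re := by
  have h1 : (starRingEnd ℂ) (M i i) = M i i := hM.1.apply i i
  have h2 := hM.2 (Finsupp.single i 1)
  simp [Finsupp.sum_single_index] at h2
  exact ⟨(Complex.conj_eq_iff_re.mp h1).symm, (Complex.le_def.mp h2).1⟩

lemma trace2 (S : Matrix (Fin 2) (Fin 2) ℂ) : S.trace ^ 2 = (S * S).trace + 2 * S.det := by
  simp [Matrix.trace, Matrix.det_fin_two, Fin.sum_univ_two, Matrix.mul_apply, Matrix.diag]
  ring

lemma psd_det_re {n : Type*} [Fintype n] [DecidableEq n] {M : Matrix n n ℂ} (hM : M.PosSemidef) :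
    M.det = ((M.det).re : ℂ) ∧ 0 ≤ (M.det).re := by
  obtain ⟨r, hr, hr0⟩ : ∃ r : ℝ, M.det = (r : ℂ) ∧ 0 ≤ r := by
    refine ⟨∏ i, hM.1.eigenvalues i, ?_, Finset.prod_nonneg fun i _ => hM.eigenvalues_nonneg i⟩
    rw [hM.1.det_eq_prod_eigenvalues]; push_cast; rfl
  rw [hr]; simp [hr0]

lemma psd_trace_re {n : Type*} [Fintype n] {M : Matrix n n ℂ} (hM : M.PosSemidef) :
    M.trace = ((M.trace).re : ℂ) ∧ 0 ≤ (M.trace).re := by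
  have key : M.trace = ((∑ i, (M i i).re : ℝ) : ℂ) := by
    rw [Matrix.trace]; push_cast
    exact Finset.sum_congr rfl fun i _ => (psd_diag_re hM i).1
  rw [key]; simp
  exact Finset.sum_nonneg fun i _ => (psd_diag_re hM i).2

lemma trace_sqrt_sq {M : Matrix (Fin 2) (Fin 2) ℂ} (hM : M.PosSemidef) :
    0 ≤ (hM.sqrt.trace).re ∧
    ((hM.sqrt.trace).re) ^ 2 = M.trace.re + 2 * Real.sqrt (M.det.re) := by
  set S := hM.sqrt with hS
  have hSp : S.PosSemidef := hM.posSemidef_sqrt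
  have hmul : S * S = M := hM.sqrt_mul_self
  obtain ⟨htr, htr0⟩ := psd_trace_re hSp
  obtain ⟨hdt, hdt0⟩ := psd_det_re hSp
  have hdet : S.det ^ 2 = M.det := by rw [← hmul, det_mul]; ring
  have hMdet : M.det.re = (S.det.re) ^ 2 := by
    rw [← hdet, hdt]; simp [← Complex.ofReal_pow]
  have hsd : Real.sqrt (M.det.re) = S.det.re := by rw [hMdet, Real.sqrt_sq hdt0]
  have htr2 := trace2 S
  rw [hmul] at htr2
  refine ⟨htr0, ?_⟩
  have hc : ((S.trace.re ^ 2 : ℝ) : ℂ) = ((M.trace.re + 2 * S.det.re : ℝ) : ℂ) := by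
    push_cast
    rw [← htr, ← hdt, htr2, (psd_trace_re hM).1]; simp
  have := Complex.ofReal_injective hc
  rw [this, hsd]

lemma sqrt_congr {n : Type*} [Fintype n] [DecidableEq n] {A B : Matrix n n ℂ}
    (h : A = B) (hA : A.PosSemidef) (hB : B.PosSemidef) : hA.sqrt = hB.sqrt := by
  subst h; rfl

lemma fid_eq (ρ σ : Matrix (Fin 2) (Fin 2) ℂ) (hρ : ρ.PosSemidef) (hσ : σ.PosSemidef) :
    fidelity ρ σ = (ρ * σ).trace.re + 2 * Real.sqrt (ρ.det.re * σ.det.re) := by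
  rw [fidelity, dif_pos (⟨hρ, hσ⟩ : ρ.PosSemidef ∧ σ.PosSemidef)]
  show (traceNorm (hρ.sqrt * hσ.sqrt)) ^ 2 = _
  set A := hρ.sqrt * hσ.sqrt with hA
  have hE : Aᴴ * A = hσ.sqrt * ρ * hσ.sqrt := by
    rw [hA, conjTranspose_mul, hρ.posSemidef_sqrt.1, hσ.posSemidef_sqrt.1]
    rw [Matrix.mul_assoc, ← Matrix.mul_assoc hρ.sqrt, hρ.sqrt_mul_self, ← Matrix.mul_assoc,
      Matrix.mul_assoc]
  have hMpsd : (hσ.sqrt * ρ * hσ.sqrt).PosSemidef := hE ▸ posSemidef_conjTranspose_mul_self A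
  rw [traceNorm, sqrt_congr hE _ hMpsd]
  obtain ⟨h0, hsq⟩ := trace_sqrt_sq hMpsd
  rw [hsq]
  have htr : (hσ.sqrt * ρ * hσ.sqrt).trace = (ρ * σ).trace := by
    rw [Matrix.trace_mul_cycle, hσ.sqrt_mul_self, Matrix.trace_mul_comm]
  have hdet : (hσ.sqrt * ρ * hσ.sqrt).det.re = ρ.det.re * σ.det.re := by
    have h2 : hσ.sqrt.det * hσ.sqrt.det = σ.det := by rw [← det_mul, hσ.sqrt_mul_self]
    have : (hσ.sqrt * ρ * hσ.sqrt).det = ρ.det * σ.det := by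
      rw [det_mul, det_mul]; linear_combination ρ.det * h2
    rw [this, (psd_det_re hρ).1, (psd_det_re hσ).1, ← Complex.ofReal_mul]; simp
  rw [htr, hdet]

lemma fid_diag (ρ σ : Matrix (Fin 2) (Fin 2) ℂ) (hρ : ρ.PosSemidef) (hσ : σ.PosSemidef)
    (hd : σ.IsDiag) :
    fidelity ρ σ = (ρ 0 0).re * (σ 0 0).re + (ρ 1 1).re * (σ 1 1).re
      + 2 * Real.sqrt (ρ.det.re * ((σ 0 0).re * (σ 1 1).re)) := by
  have h01 : σ 0 1 = 0 := hd (by decide)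
  have h10 : σ 1 0 = 0 := hd (by decide)
  rw [fid_eq _ _ hρ hσ]
  have f1 := (psd_diag_re hσ 0).1
  have f2 := (psd_diag_re hσ 1).1
  have htr : (ρ * σ).trace.re = (ρ 0 0).re * (σ 0 0).re + (ρ 1 1).re * (σ 1 1).re := by
    rw [Matrix.trace_fin_two]
    simp only [Matrix.mul_apply, Fin.sum_univ_two, h01, h10, mul_zero, zero_add, add_zero]
    rw [f1, f2]
    simp [Complex.add_re, Complex.mul_re]
  have hdet : σ.det.re = (σ 0 0).re * (σ 1 1).re := by
    rw [Matrix.det_fin_two, h01, f1, f2]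
    simp
  rw [htr, hdet]

lemma diag_density (p : ℝ) (hp0 : 0 ≤ p) (hp1 : p ≤ 1) :
    IsDensity (Matrix.diagonal ![((p : ℝ) : ℂ), ((1 - p : ℝ) : ℂ)]) := by
  constructor
  · refine PosSemidef.diagonal fun i => ?_
    fin_cases i
    · exact Complex.zero_le_real.mpr hp0
    · exact Complex.zero_le_real.mpr (by linarith)
  · rw [Matrix.trace_diagonal, Fin.sum_univ_two]
    show ((p : ℝ) : ℂ) + ((1 - p : ℝ) : ℂ) = 1
    push_cast; ring

lemma aux_prod {a d D R : ℝ} (hRne : R ≠ 0) (hDval : D = R^2 - (a - d)^2/4) :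
    D * ((1/2 + (a - d)/(4*R)) * (1 - (1/2 + (a - d)/(4*R)))) = (D/(2*R))^2 := by
  subst hDval
  field_simp
  ring

lemma aux_val {a d D R : ℝ} (hRne : R ≠ 0) (hsum : a + d = 1)
    (hDval : D = R^2 - (a - d)^2/4) :
    a * (1/2 + (a - d)/(4*R)) + d * (1 - (1/2 + (a - d)/(4*R))) + 2 * (D/(2*R)) = 1/2 + R := by
  subst hDval
  have hd1 : d = 1 - a := by linarith
  subst hd1
  field_simp
  ring

lemma aux_t2 {a d D t : ℝ} (hsum : a + d = 1) (hD : D = a * d - t ^ 2) (hD0 : 0 ≤ D) :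
    t ^ 2 ≤ 1 / 4 := by nlinarith [sq_nonneg (a - d)]

lemma aux_key {p s e a d R : ℝ} (hxy : (p - 1/2)^2 + s^2 = 1/4)
    (huv : (a - d)^2 + 4*e^2 = 4*R^2) :
    ((p - 1/2) * (a - d) + 2 * s * e) ^ 2 ≤ R ^ 2 := by
  have h : R^2 - ((p - 1/2)*(a - d) + 2*s*e)^2 = ((p - 1/2)*(2*e) - s*(a - d))^2 := by
    linear_combination (-((a - d)^2 + 4*e^2)) * hxy - (1/4) * huv
  linarith [sq_nonneg ((p - 1/2)*(2*e) - s*(a - d))]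

set_option maxHeartbeats 1000000 in
/-- For any single-qubit density matrix, the geometric coherence
C_g(ρ) = 1 − max_{σ incoherent} F(ρ,σ) and the ℓ₁-norm coherence C(ρ) = 2|ρ₀₁|
satisfy C_g(ρ) = (1 − √(1 − C(ρ)²))/2. -/
theorem stmt_12 (ρ : Matrix (Fin 2) (Fin 2) ℂ) (hρ : IsDensity ρ) :
    1 - sSup {x : ℝ | ∃ σ : Matrix (Fin 2) (Fin 2) ℂ,
        IsDensity σ ∧ σ.IsDiag ∧ x = fidelity ρ σ}
      = (1 - Real.sqrt (1 - (2 * ‖ρ 0 1‖) ^ 2)) / 2 := by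
  obtain ⟨hpsd, htr1⟩ := hρ
  set t := ‖ρ 0 1‖ with htdef
  set a := (ρ 0 0).re with hadef
  set d := (ρ 1 1).re with hddef
  set D := ρ.det.re with hDdef
  have e0 := psd_diag_re hpsd 0
  have e1 := psd_diag_re hpsd 1
  have hsum : a + d = 1 := by
    have h := htr1
    rw [Matrix.trace_fin_two, e0.1, e1.1] at h
    exact_mod_cast h
  have hρ10 : ρ 1 0 = (starRingEnd ℂ) (ρ 0 1) := (hpsd.1.apply 1 0).symm
  have hD : D = a * d - t ^ 2 := by
    have hdet2 : ρ.det = (a : ℂ) * (d : ℂ) - ((Complex.normSq (ρ 0 1) : ℝ) : ℂ) := by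
      rw [Matrix.det_fin_two, hρ10, Complex.mul_conj]
      rw [← e0.1, ← e1.1]
    rw [hDdef, hdet2]
    simp [Complex.sq_norm, htdef]
  have hD0 : 0 ≤ D := (psd_det_re hpsd).2
  have ha0 : 0 ≤ a := e0.2
  have hd0 : 0 ≤ d := e1.2
  have ht2 : t ^ 2 ≤ 1 / 4 := aux_t2 hsum hD hD0
  set R := Real.sqrt (1 / 4 - t ^ 2) with hRdef
  have hR0 : 0 ≤ R := Real.sqrt_nonneg _
  have hR2 : R ^ 2 = 1 / 4 - t ^ 2 := Real.sq_sqrt (by linarith)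
  have hR2' : 4 * R ^ 2 = (a - d) ^ 2 + 4 * D := by
    linear_combination 4*hR2 - 4*hD - (1 + a + d)*hsum
  have hub : ∀ x ∈ {x : ℝ | ∃ σ : Matrix (Fin 2) (Fin 2) ℂ,
      IsDensity σ ∧ σ.IsDiag ∧ x = fidelity ρ σ}, x ≤ 1 / 2 + R := by
    rintro x ⟨σ, ⟨hσpsd, hσtr⟩, hσdiag, rfl⟩
    rw [fid_diag ρ σ hpsd hσpsd hσdiag]
    set p := (σ 0 0).re with hpdef
    set q := (σ 1 1).re with hqdef
    have hp0 : 0 ≤ p := (psd_diag_re hσpsd 0).2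
    have hq0 : 0 ≤ q := (psd_diag_re hσpsd 1).2
    have hpq : p + q = 1 := by
      have h := hσtr
      rw [Matrix.trace_fin_two, (psd_diag_re hσpsd 0).1, (psd_diag_re hσpsd 1).1] at h
      exact_mod_cast h
    have hq1 : q = 1 - p := by linarith
    set s := Real.sqrt (p * q) with hsdef
    have hs0 : 0 ≤ s := Real.sqrt_nonneg _
    have hs2 : s ^ 2 = p * q := Real.sq_sqrt (mul_nonneg hp0 hq0)
    set e := Real.sqrt D with hedef
    have he0 : 0 ≤ e := Real.sqrt_nonneg _
    have he2 : e ^ 2 = D := Real.sq_sqrt hD0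
    have hsqrt : Real.sqrt (D * (p * q)) = e * s := by
      rw [Real.sqrt_mul hD0]
    have hxy : (p - 1/2)^2 + s^2 = 1/4 := by linear_combination hs2 + p * hq1
    have huv : (a - d)^2 + 4*e^2 = 4*R^2 := by linear_combination 4*he2 - hR2'
    have key : ((p - 1/2) * (a - d) + 2 * s * e) ^ 2 ≤ R ^ 2 := aux_key hxy huv
    have key2 : (p - 1/2) * (a - d) + 2 * s * e ≤ R := by
      calc (p - 1/2) * (a - d) + 2 * s * e ≤ |(p - 1/2) * (a - d) + 2 * s * e| := le_abs_self _
        _ = Real.sqrt (((p - 1/2) * (a - d) + 2 * s * e) ^ 2) := (Real.sqrt_sq_eq_abs _).symm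
        _ ≤ Real.sqrt (R ^ 2) := Real.sqrt_le_sqrt key
        _ = R := Real.sqrt_sq hR0
    have hlin : a * p + d * q = 1/2 + (p - 1/2) * (a - d) := by
      linear_combination d * hq1 + (1/2) * hsum
    rw [hsqrt, hlin]
    linarith
  have hmem : (1/2 + R) ∈ {x : ℝ | ∃ σ : Matrix (Fin 2) (Fin 2) ℂ,
      IsDensity σ ∧ σ.IsDiag ∧ x = fidelity ρ σ} := by
    rcases eq_or_lt_of_le hR0 with hR | hR
    · have hR2z : R ^ 2 = 0 := by rw [← hR]; ring
      have hadsq : (a - d) ^ 2 = 0 := by linarith [sq_nonneg (a - d)]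
      have had : a = d := by
        have := sq_eq_zero_iff.mp hadsq; linarith
      have hDz : D = 0 := by linarith [sq_nonneg (a - d)]
      refine ⟨Matrix.diagonal ![((1/2 : ℝ) : ℂ), ((1 - 1/2 : ℝ) : ℂ)],
        diag_density (1/2) (by norm_num) (by norm_num), Matrix.isDiag_diagonal _, ?_⟩
      rw [fid_diag _ _ hpsd (diag_density (1/2) (by norm_num) (by norm_num)).1
        (Matrix.isDiag_diagonal _)]
      simp only [Matrix.diagonal_apply_eq, Matrix.cons_val_zero, Matrix.cons_val_one,
        Matrix.head_cons, Complex.ofReal_re]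
      rw [← hDdef, hDz]
      norm_num
      linarith
    · have hRne : R ≠ 0 := ne_of_gt hR
      set p0 := 1/2 + (a - d)/(4*R) with hp0def
      have h4R : (0:ℝ) < 4*R := by linarith
      have habs : (a - d)^2 ≤ (2*R)^2 := by
        have h : (2*R)^2 = 4*R^2 := by ring
        linarith
      have hle : |a - d| ≤ 2*R := by
        have h := Real.sqrt_le_sqrt habs
        rwa [Real.sqrt_sq_eq_abs, Real.sqrt_sq (by linarith)] at h
      have hp0l : 0 ≤ p0 := by
        rw [hp0def]
        have h : -(1/2) ≤ (a - d)/(4*R) := by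
          rw [le_div_iff₀ h4R]; have := neg_abs_le (a - d); linarith
        linarith
      have hp0u : p0 ≤ 1 := by
        rw [hp0def]
        have h : (a - d)/(4*R) ≤ 1/2 := by
          rw [div_le_iff₀ h4R]; have := le_abs_self (a - d); linarith
        linarith
      have hDval : D = R^2 - (a - d)^2/4 := by linarith
      have hd1 : d = 1 - a := by linarith
      refine ⟨Matrix.diagonal ![((p0 : ℝ) : ℂ), ((1 - p0 : ℝ) : ℂ)],
        diag_density p0 hp0l hp0u, Matrix.isDiag_diagonal _, ?_⟩
      rw [fid_diag _ _ hpsd (diag_density p0 hp0l hp0u).1 (Matrix.isDiag_diagonal _)]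
      simp only [Matrix.diagonal_apply_eq, Matrix.cons_val_zero, Matrix.cons_val_one,
        Matrix.head_cons, Complex.ofReal_re]
      rw [← hDdef]
      have hprod : D * (p0 * (1 - p0)) = (D/(2*R))^2 := by
        rw [hp0def]; exact aux_prod hRne hDval
      have hsqrt : Real.sqrt (D * (p0 * (1 - p0))) = D/(2*R) := by
        rw [hprod, Real.sqrt_sq (by positivity)]
      rw [hsqrt, hp0def]
      exact (aux_val hRne hsum hDval).symm
  have hSup : sSup {x : ℝ | ∃ σ : Matrix (Fin 2) (Fin 2) ℂ,
      IsDensity σ ∧ σ.IsDiag ∧ x = fidelity ρ σ} = 1/2 + R :=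
    IsGreatest.csSup_eq ⟨hmem, hub⟩
  rw [hSup]
  have h2R : Real.sqrt (1 - (2*t)^2) = 2*R := by
    have h : (1 : ℝ) - (2*t)^2 = (2*R)^2 := by linear_combination -4*hR2
    rw [h, Real.sqrt_sq (by linarith)]
  rw [h2R]
  ring
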